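/- Let (e_k) be a sequence of positive integers indexed by k ≥ 1 such that e_1 ≥ 1 and 2^(e_k) > 10^(e_{k-1}) for all k ≥ 2. If N is a positive integer divisible by 2^(e_k) for some k ≥ 1, and N is not divisible by 10, then the number of nonzero digits in the decimal expansion of N is at least k. -/

import Mathlib

/-- Number of nonzero digits in the base-`b` expansion of `N`. -/
def countNonzeroDigits (b N : ℕ) : ℕ :=
  ((Nat.digits b N).filter (· ≠ 0)).length

lemma cnd_pos (N : ℕ) (hN : 0 < N) : 1 ≤ countNonzeroDigits 10 N := by
  have hne : Nat.digits 10 N ≠ [] := Nat.digits_ne_nil_iff_ne_zero.mpr hN.ne'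
  have hlast := Nat.getLast_digit_ne_zero 10 hN.ne'
  have hmem : (Nat.digits 10 N).getLast hne ∈ (Nat.digits 10 N).filter (· ≠ 0) := by
    refine List.mem_filter.mpr ⟨List.getLast_mem hne, by simpa using hlast⟩
  have : (Nat.digits 10 N).filter (· ≠ 0) ≠ [] := List.ne_nil_of_mem hmem
  exact List.length_pos_iff.mpr this

lemma digits_len_le_of_lt_pow {r d : ℕ} (h : r < 10 ^ d) :
    (Nat.digits 10 r).length ≤ d := by
  rcases Nat.eq_zero_or_pos r with rfl | hr
  · simp
  rw [Nat.digits_len 10 r (by norm_num) hr.ne']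
  have : Nat.log 10 r < d := (Nat.log_lt_iff_lt_pow (by norm_num) hr.ne').mpr h
  omega

/-- split lemma: if `r < 10^d` and `m > 0` then
`countNonzeroDigits 10 (r + 10^d * m) = countNonzeroDigits 10 r + countNonzeroDigits 10 m`. -/
lemma cnd_split {r d m : ℕ} (hr : r < 10 ^ d) (hm : 0 < m) :
    countNonzeroDigits 10 (r + 10 ^ d * m) =
      countNonzeroDigits 10 r + countNonzeroDigits 10 m := by
  have hlen : (Nat.digits 10 r).length ≤ d := digits_len_le_of_lt_pow hr
  have hd : (Nat.digits 10 r).length + (d - (Nat.digits 10 r).length) = d := by omega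
  have h := Nat.digits_append_zeroes_append_digits (b := 10) (k := d - (Nat.digits 10 r).length)
    (m := m) (n := r) (by norm_num) hm
  rw [hd] at h
  unfold countNonzeroDigits
  rw [← h]
  simp [List.filter_append]

theorem stmt_0 (e : ℕ → ℕ) (he1 : 1 ≤ e 1)
    (hstep : ∀ k ≥ 2, 2 ^ e k > 10 ^ e (k - 1))
    (N : ℕ) (hN : 0 < N) (k : ℕ) (hk : 1 ≤ k)
    (hdvd : 2 ^ e k ∣ N) (hnd : ¬ (10 ∣ N)) :
    countNonzeroDigits 10 N ≥ k := by
  have hpos : ∀ j, 1 ≤ j → 1 ≤ e j := by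
    intro j hj
    rcases Nat.lt_or_ge j 2 with h | h
    · interval_cases j; exact he1
    · have := hstep j h
      have h1 : (1:ℕ) ≤ 10 ^ e (j - 1) := Nat.one_le_pow _ _ (by norm_num)
      by_contra hc
      push_neg at hc
      interval_cases (e j) <;> omega
  induction k, hk using Nat.le_induction generalizing N with
  | base => exact cnd_pos N hN
  | succ k hk ih =>
    have hstepk := hstep (k + 1) (by omega)
    simp only [Nat.add_sub_cancel] at hstepk
    set d := e k with hd
    set r := N % 10 ^ d with hrdef
    set m := N / 10 ^ d with hmdef
    have hNsplit : N = r + 10 ^ d * m := (Nat.mod_add_div N (10 ^ d)).symm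
    have hdpos : 1 ≤ d := hpos k hk
    -- e k < e (k+1)
    have hlt : e k < e (k + 1) := by
      have h1 : (2:ℕ) ^ e k ≤ 10 ^ e k := Nat.pow_le_pow_left (by norm_num) _
      have h2 : (2:ℕ) ^ e k < 2 ^ e (k + 1) := lt_of_le_of_lt h1 hstepk
      exact (Nat.pow_lt_pow_iff_right (by norm_num)).mp h2
    have hdvdk : 2 ^ e k ∣ N := dvd_trans (pow_dvd_pow 2 hlt.le) hdvd
    -- 2 ^ e k divides r
    have hdvdr : 2 ^ e k ∣ r := by
      have h10 : (2:ℕ) ^ e k ∣ 10 ^ d := pow_dvd_pow_of_dvd (by norm_num) d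
      exact (Nat.dvd_mod_iff h10).mpr hdvdk
    -- r not divisible by 10, hence positive
    have hndr : ¬ (10 ∣ r) := by
      intro h
      apply hnd
      rw [hNsplit]
      exact Nat.dvd_add h (Dvd.dvd.mul_right (dvd_pow_self 10 (by omega)) m)
    have hrpos : 0 < r := by
      rcases Nat.eq_zero_or_pos r with h | h
      · exact absurd (h ▸ dvd_zero 10) hndr
      · exact h
    -- m positive
    have hmpos : 0 < m := by
      have hNge : 2 ^ e (k+1) ≤ N := Nat.le_of_dvd hN hdvd
      have hlt10 : 10 ^ d < N := lt_of_lt_of_le hstepk hNge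
      exact Nat.div_pos hlt10.le (by positivity)
    have hrlt : r < 10 ^ d := Nat.mod_lt _ (by positivity)
    have hIH := ih r hrpos hdvdr hndr
    have hm1 := cnd_pos m hmpos
    have := cnd_split hrlt hmpos
    rw [hNsplit, this]
    omega
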